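/- Let G be a group generated by a finite set X and let H be a K-quasiconvex subgroup of G (every geodesic in the Cayley graph of G with endpoints in H stays in the K-neighborhood of H). Then H is generated by the set of elements of H representable by words over X of length at most 2K+1. -/

import Mathlib

/-- Evaluate a word over `X ∪ X⁻¹` (letters indexed by `Fin k`, with a sign bit)
in the group `G`, where `ρ : Fin k → G` lists the generators. -/
def evalWord {G : Type*} [Group G] {k : ℕ} (ρ : Fin k → G)
    (w : List (Fin k × Bool)) : G :=
  (w.map fun p => if p.2 then ρ p.1 else (ρ p.1)⁻¹).prod

/-- Word length of `g` with respect to the generating set `ρ`. -/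
noncomputable def wl {G : Type*} [Group G] {k : ℕ} (ρ : Fin k → G) (g : G) : ℕ :=
  sInf {n | ∃ w : List (Fin k × Bool), evalWord ρ w = g ∧ w.length = n}

/-- `ρ` is a generating set of `G`. -/
def Generates {G : Type*} [Group G] {k : ℕ} (ρ : Fin k → G) : Prop :=
  Subgroup.closure (Set.range ρ) = ⊤

/-- `w` is the label of a geodesic in the Cayley graph from `a` to `b`. -/
def IsGeodesicWord {G : Type*} [Group G] {k : ℕ} (ρ : Fin k → G)
    (a b : G) (w : List (Fin k × Bool)) : Prop :=
  evalWord ρ w = a⁻¹ * b ∧ w.length = wl ρ (a⁻¹ * b)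

/-- `v` is a vertex on the path starting at `a` labeled by `w`. -/
def VertexOn {G : Type*} [Group G] {k : ℕ} (ρ : Fin k → G)
    (a : G) (w : List (Fin k × Bool)) (v : G) : Prop :=
  ∃ i ≤ w.length, v = a * evalWord ρ (w.take i)

/-- `H` is `K`-quasiconvex: every vertex on a geodesic with endpoints in `H`
is within distance `K` of `H`. -/
def IsQuasiconvex {G : Type*} [Group G] {k : ℕ} (ρ : Fin k → G)
    (H : Subgroup G) (K : ℕ) : Prop :=
  ∀ a ∈ H, ∀ b ∈ H, ∀ w, IsGeodesicWord ρ a b w →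
    ∀ v, VertexOn ρ a w v → ∃ h ∈ H, wl ρ (v⁻¹ * h) ≤ K

/-- `G` is `δ`-hyperbolic: geodesic triangles are `δ`-thin. -/
def IsHyperbolic {G : Type*} [Group G] {k : ℕ} (ρ : Fin k → G) (δ : ℕ) : Prop :=
  ∀ a b c : G, ∀ wab wbc wac,
    IsGeodesicWord ρ a b wab → IsGeodesicWord ρ b c wbc → IsGeodesicWord ρ a c wac →
    ∀ v, VertexOn ρ a wab v →
      ∃ u, (VertexOn ρ b wbc u ∨ VertexOn ρ a wac u) ∧ wl ρ (v⁻¹ * u) ≤ δ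

/-- The conjugate subgroup `g⁻¹ H g`. -/
def conjSub {G : Type*} [Group G] (g : G) (H : Subgroup G) : Subgroup G :=
  Subgroup.map (MulAut.conj g⁻¹).toMonoidHom H

namespace QC
variable {G : Type*} [Group G] {k : ℕ} (ρ : Fin k → G)

lemma evalWord_append (w1 w2 : List (Fin k × Bool)) :
    evalWord ρ (w1 ++ w2) = evalWord ρ w1 * evalWord ρ w2 := by
  simp [evalWord]

def invWord (w : List (Fin k × Bool)) : List (Fin k × Bool) :=
  w.reverse.map fun p => (p.1, !p.2)

lemma evalWord_invWord (w : List (Fin k × Bool)) :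
    evalWord ρ (invWord w) = (evalWord ρ w)⁻¹ := by
  induction w with
  | nil => simp [evalWord, invWord]
  | cons a t ih =>
    have : invWord (a :: t) = invWord t ++ [(a.1, !a.2)] := by simp [invWord]
    rw [this, evalWord_append, ih]
    cases a with
    | mk i b => cases b <;> simp [evalWord]

lemma exists_word (hgen : Generates ρ) (g : G) :
    ∃ w : List (Fin k × Bool), evalWord ρ w = g := by
  have hg : g ∈ Subgroup.closure (Set.range ρ) := by rw [hgen]; trivial
  induction hg using Subgroup.closure_induction with
  | mem x hx =>
    obtain ⟨i, rfl⟩ := hx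
    exact ⟨[(i, true)], by simp [evalWord]⟩
  | one => exact ⟨[], by simp [evalWord]⟩
  | mul x y _ _ hx hy =>
    obtain ⟨w1, rfl⟩ := hx; obtain ⟨w2, rfl⟩ := hy
    exact ⟨w1 ++ w2, evalWord_append ρ w1 w2⟩
  | inv x _ hx =>
    obtain ⟨w, rfl⟩ := hx
    exact ⟨invWord w, evalWord_invWord ρ w⟩

lemma wl_spec (hgen : Generates ρ) (g : G) :
    ∃ w : List (Fin k × Bool), evalWord ρ w = g ∧ w.length = wl ρ g := by
  obtain ⟨w, hw⟩ := exists_word ρ hgen g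
  have hne : {n | ∃ w : List (Fin k × Bool), evalWord ρ w = g ∧ w.length = n}.Nonempty :=
    ⟨w.length, w, hw, rfl⟩
  exact Nat.sInf_mem hne

lemma wl_le {w : List (Fin k × Bool)} {g : G} (hw : evalWord ρ w = g) :
    wl ρ g ≤ w.length := Nat.sInf_le ⟨w, hw, rfl⟩

lemma wl_one : wl ρ (1 : G) = 0 :=
  Nat.le_zero.mp (wl_le ρ (w := []) (by simp [evalWord]))

lemma wl_mul (hgen : Generates ρ) (a b : G) :
    wl ρ (a * b) ≤ wl ρ a + wl ρ b := by
  obtain ⟨w1, h1, l1⟩ := wl_spec ρ hgen a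
  obtain ⟨w2, h2, l2⟩ := wl_spec ρ hgen b
  calc wl ρ (a * b) ≤ (w1 ++ w2).length :=
        wl_le ρ (by rw [evalWord_append, h1, h2])
    _ = wl ρ a + wl ρ b := by simp [l1, l2]

lemma wl_inv (hgen : Generates ρ) (a : G) : wl ρ a⁻¹ ≤ wl ρ a := by
  obtain ⟨w, hw, hl⟩ := wl_spec ρ hgen a
  calc wl ρ a⁻¹ ≤ (invWord w).length := wl_le ρ (by rw [evalWord_invWord, hw])
    _ = wl ρ a := by simp [invWord, hl]

end QC

/-- A `K`-quasiconvex subgroup of a group with finite generating set `ρ` is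
generated by its elements of word length at most `2K+1`. -/
theorem quasiconvex_generated_by_short_elements
    {G : Type*} [Group G] {k : ℕ} (ρ : Fin k → G) (hgen : Generates ρ)
    (H : Subgroup G) (K : ℕ) (hqc : IsQuasiconvex ρ H K) :
    Subgroup.closure {h : G | h ∈ H ∧ wl ρ h ≤ 2 * K + 1} = H := by
  apply le_antisymm
  · rw [Subgroup.closure_le]; intro x hx; exact hx.1
  · intro h hh
    obtain ⟨w, hw, hlen⟩ := QC.wl_spec ρ hgen h
    set n := w.length with hn
    set v : ℕ → G := fun i => evalWord ρ (w.take i) with hv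
    have hgeo : IsGeodesicWord ρ 1 h w := ⟨by simp [hw], by simp [← hlen]; rfl⟩
    -- choose nearby subgroup elements
    have hchoice : ∀ i, ∃ fi : G, fi ∈ H ∧ wl ρ ((v i)⁻¹ * fi) ≤ K ∧
        (i = 0 → n ≠ 0 → fi = 1) ∧ (n ≤ i → fi = h) := by
      intro i
      rcases le_or_gt n i with hni | hni
      · refine ⟨h, hh, ?_, fun h0 hn0 => absurd (le_antisymm (h0 ▸ hni) (Nat.zero_le n)) hn0,
          fun _ => rfl⟩
        have : v i = h := by
          simp only [hv]; rw [List.take_of_length_le (hn ▸ hni), hw]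
        rw [this]; simp [QC.wl_one ρ]
      · rcases Nat.eq_zero_or_pos i with rfl | hi0
        · refine ⟨1, H.one_mem, ?_, fun _ _ => rfl, fun hle => absurd hle (by omega)⟩
          have : v 0 = 1 := by simp [hv, evalWord]
          rw [this]; simp [QC.wl_one ρ]
        · obtain ⟨fi, hfiH, hfi⟩ := hqc 1 H.one_mem h hh w hgeo (v i)
            ⟨i, le_of_lt (hn ▸ hni), by simp [hv]⟩
          exact ⟨fi, hfiH, hfi, by omega, fun hle => absurd hle (by omega)⟩
    choose f hfH hfK hf0 hfn using hchoice
    -- consecutive vertices differ by one letter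
    have hstep : ∀ i < n, wl ρ ((v i)⁻¹ * v (i + 1)) ≤ 1 := by
      intro i hi
      have hi' : i < w.length := hn ▸ hi
      have htake : w.take (i + 1) = w.take i ++ [w.get ⟨i, hi'⟩] := by
        rw [List.take_succ, List.getElem?_eq_getElem hi']
        simp
      have : (v i)⁻¹ * v (i + 1) = evalWord ρ [w.get ⟨i, hi'⟩] := by
        simp only [hv]; rw [htake, QC.evalWord_append]; group
      rw [this]
      exact le_trans (QC.wl_le ρ rfl) (by simp)
    -- each consecutive quotient of f's is short
    have hshort : ∀ i < n, wl ρ ((f i)⁻¹ * f (i + 1)) ≤ 2 * K + 1 := by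
      intro i hi
      have hdecomp : (f i)⁻¹ * f (i + 1) =
          ((v i)⁻¹ * f i)⁻¹ * ((v i)⁻¹ * v (i + 1)) * ((v (i + 1))⁻¹ * f (i + 1)) := by
        group
      rw [hdecomp]
      calc wl ρ (((v i)⁻¹ * f i)⁻¹ * ((v i)⁻¹ * v (i + 1)) * ((v (i + 1))⁻¹ * f (i + 1)))
          ≤ wl ρ (((v i)⁻¹ * f i)⁻¹ * ((v i)⁻¹ * v (i + 1))) + wl ρ ((v (i + 1))⁻¹ * f (i + 1)) :=
            QC.wl_mul ρ hgen _ _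
        _ ≤ wl ρ ((v i)⁻¹ * f i)⁻¹ + wl ρ ((v i)⁻¹ * v (i + 1)) + wl ρ ((v (i + 1))⁻¹ * f (i + 1)) :=
            Nat.add_le_add_right (QC.wl_mul ρ hgen _ _) _
        _ ≤ K + 1 + K := by
            have h1 := le_trans (QC.wl_inv ρ hgen _) (hfK i)
            have h2 := hstep i hi
            have h3 := hfK (i + 1)
            omega
        _ ≤ 2 * K + 1 := by omega
    -- induction: f j ∈ closure
    set S := {h : G | h ∈ H ∧ wl ρ h ≤ 2 * K + 1} with hS
    have hcl : ∀ j ≤ n, f j ∈ Subgroup.closure S := by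
      intro j hj
      induction j with
      | zero =>
        rcases Nat.eq_zero_or_pos n with hn0 | hn0
        · rw [hfn 0 (by omega)]
          have : h = 1 := by
            rw [← hw]
            have : w = [] := List.length_eq_zero_iff.mp (hn ▸ hn0)
            simp [this, evalWord]
          rw [this]; exact Subgroup.one_mem _
        · rw [hf0 0 rfl (by omega)]; exact Subgroup.one_mem _
      | succ j ih =>
        have hj' : j ≤ n := by omega
        have : f (j + 1) = f j * ((f j)⁻¹ * f (j + 1)) := by group
        rw [this]
        refine Subgroup.mul_mem _ (ih hj') (Subgroup.subset_closure ?_)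
        exact ⟨H.mul_mem (H.inv_mem (hfH j)) (hfH (j + 1)), hshort j (by omega)⟩
    have := hcl n le_rfl
    rwa [hfn n le_rfl] at this
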